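/- The element t^d lies in the field of fractions of R and is integral over R (it satisfies the monic polynomial X^e - t^{de}), but t^d is not an element of R when e ≥ 2; hence R is not integrally closed. -/

import Mathlib

open MvPolynomial

/-- Generators of the coordinate ring of the weighted rational curve of type `(d,e)`:
`s^{d-i} t^i` for `0 ≤ i ≤ d-1` and `s^{e-1-j} t^{de-(e-1)+j}` for `0 ≤ j ≤ e-1`. -/
noncomputable def wrcGens (k : Type*) [Field k] (d e : ℕ) : Set (MvPolynomial (Fin 2) k) :=
  ((fun i => X 0 ^ (d - i) * X 1 ^ i) '' Set.Iic (d - 1)) ∪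
  ((fun j => X 0 ^ (e - 1 - j) * X 1 ^ (d * e - (e - 1) + j)) '' Set.Iic (e - 1))

/-- `t^d` is not in the adjoin of the generators. -/
lemma wrc_td_not_mem (k : Type*) [Field k] (d e : ℕ) (hd : 1 ≤ d) (he : 2 ≤ e) :
    (X 1 : MvPolynomial (Fin 2) k) ^ d ∉ Algebra.adjoin k (wrcGens k d e) := by
  intro hmem
  set n := d * e with hn
  have hen : e ≤ n := Nat.le_mul_of_pos_left e hd
  have hdn : d < n := by
    calc d < d * 2 := by omega
    _ ≤ d * e := Nat.mul_le_mul_left d he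
  -- the detecting algebra map
  let A := AddMonoidAlgebra k (ZMod n)
  let u : A := AddMonoidAlgebra.single (1 : ZMod n) (1 : k)
  let ψ : MvPolynomial (Fin 2) k →ₐ[k] A := aeval ![0, u]
  have hψ0 : ψ (X 0) = 0 := by simp [ψ]
  have hψ1 : ψ (X 1) = u := by simp [ψ]
  have hun : ∀ m : ℕ, u ^ m = AddMonoidAlgebra.single ((m : ZMod n)) 1 := by
    intro m
    rw [AddMonoidAlgebra.single_pow, one_pow, nsmul_eq_mul, mul_one]
  have himg : ∀ g ∈ wrcGens k d e, ψ g ∈ (⊥ : Subalgebra k A) := by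
    rintro g (⟨i, hi, rfl⟩ | ⟨j, hj, rfl⟩)
    · have hi' : i ≤ d - 1 := hi
      rw [map_mul, map_pow, hψ0, zero_pow (by omega : d - i ≠ 0), zero_mul]
      exact zero_mem _
    · have hj' : j ≤ e - 1 := hj
      rw [map_mul, map_pow, map_pow, hψ0, hψ1]
      rcases eq_or_lt_of_le hj' with hje | hje
      · have h0 : e - 1 - j = 0 := by omega
        have h1 : n - (e - 1) + j = n := by omega
        rw [h0, h1, pow_zero, one_mul, hun, ZMod.natCast_self]
        rw [← AddMonoidAlgebra.one_def]
        exact one_mem _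
      · rw [zero_pow (by omega : e - 1 - j ≠ 0), zero_mul]
        exact zero_mem _
  have hψd : ψ ((X 1 : MvPolynomial (Fin 2) k) ^ d) ∈ (⊥ : Subalgebra k A) := by
    have : ψ ((X 1 : MvPolynomial (Fin 2) k) ^ d) ∈
        Subalgebra.map ψ (Algebra.adjoin k (wrcGens k d e)) := ⟨_, hmem, rfl⟩
    rw [AlgHom.map_adjoin] at this
    exact Algebra.adjoin_le (by rintro y ⟨g, hg, rfl⟩; exact himg g hg) this
  rw [Algebra.mem_bot] at hψd
  obtain ⟨c, hc⟩ := hψd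
  rw [map_pow, hψ1, hun] at hc
  rw [AddMonoidAlgebra.coe_algebraMap] at hc
  simp only [Function.comp_apply, Algebra.algebraMap_self, RingHom.id_apply] at hc
  haveI : NeZero n := ⟨by omega⟩
  rcases AddMonoidAlgebra.single_inj.mp hc.symm with ⟨h1, -⟩ | ⟨h1, -⟩
  · have : n ∣ d := (ZMod.natCast_eq_zero_iff d n).mp h1
    have := Nat.le_of_dvd (by omega) this
    omega
  · exact one_ne_zero h1

set_option maxHeartbeats 2000000 in
set_option synthInstance.maxHeartbeats 400000 in
/-- `t^d` lies in the fraction field of `R`, is integral over `R` (root of `X^e - t^{de}`),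
but is not in `R`; hence `R` is not integrally closed. -/
theorem stmt0 (k : Type*) [Field k] (d e : ℕ) (hd : 1 ≤ d) (he : 2 ≤ e)
    (R : Subalgebra k (MvPolynomial (Fin 2) k))
    (hR : R = Algebra.adjoin k (wrcGens k d e)) :
    (∃ a b : R, b ≠ 0 ∧ (b : MvPolynomial (Fin 2) k) * X 1 ^ d = (a : MvPolynomial (Fin 2) k)) ∧
    (∃ te : R, (te : MvPolynomial (Fin 2) k) = X 1 ^ (d * e) ∧
      Polynomial.aeval ((X 1 : MvPolynomial (Fin 2) k) ^ d)
        (Polynomial.X ^ e - Polynomial.C te) = 0) ∧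
    IsIntegral R ((X 1 : MvPolynomial (Fin 2) k) ^ d) ∧
    (X 1 : MvPolynomial (Fin 2) k) ^ d ∉ R ∧
    ¬ IsIntegrallyClosed R := by
  subst hR
  have hen : e - 1 ≤ d * e := le_trans (by omega) (Nat.le_mul_of_pos_left e hd)
  -- membership of generators
  have hg1m : (X 0 * X 1 ^ (d - 1) : MvPolynomial (Fin 2) k) ∈ wrcGens k d e := by
    refine Or.inl ⟨d - 1, Set.mem_Iic.mpr le_rfl, ?_⟩
    show X 0 ^ (d - (d - 1)) * X 1 ^ (d - 1) = _
    rw [show d - (d - 1) = 1 by omega, pow_one]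
  have hg0m : (X 0 ^ (e - 1) * X 1 ^ (d * e - (e - 1)) : MvPolynomial (Fin 2) k)
      ∈ wrcGens k d e := Or.inr ⟨0, Set.mem_Iic.mpr (Nat.zero_le _), by simp⟩
  have htem : ((X 1 : MvPolynomial (Fin 2) k) ^ (d * e)) ∈ wrcGens k d e := by
    refine Or.inr ⟨e - 1, Set.mem_Iic.mpr le_rfl, ?_⟩
    show X 0 ^ (e - 1 - (e - 1)) * X 1 ^ (d * e - (e - 1) + (e - 1)) = _
    rw [show e - 1 - (e - 1) = 0 by omega, Nat.sub_add_cancel hen, pow_zero, one_mul]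
  -- elements of R
  set R := Algebra.adjoin k (wrcGens k d e) with hRdef
  let a : R := ⟨_, mul_mem (Algebra.subset_adjoin hg0m) (Algebra.subset_adjoin hg1m)⟩
  let b : R := ⟨_, pow_mem (Algebra.subset_adjoin hg1m) e⟩
  let te : R := ⟨_, Algebra.subset_adjoin htem⟩
  have hteval : (te : MvPolynomial (Fin 2) k) = X 1 ^ (d * e) := rfl
  have hbval : (b : MvPolynomial (Fin 2) k) = (X 0 * X 1 ^ (d - 1)) ^ e := rfl
  have hbM : (b : MvPolynomial (Fin 2) k) ≠ 0 := by
    rw [hbval]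
    exact pow_ne_zero _ (mul_ne_zero (X_ne_zero _) (pow_ne_zero _ (X_ne_zero _)))
  have hb0 : b ≠ 0 := fun h => hbM (by rw [h]; rfl)
  -- the key monomial identity
  have h3 : (d - 1) * e + d = d * e - (e - 1) + (d - 1) := by
    have h4 : (d - 1) * e + e = d * e := by
      obtain ⟨m, rfl⟩ : ∃ m, d = m + 1 := ⟨d - 1, by omega⟩
      simp [Nat.add_mul]
    omega
  have hkey : (b : MvPolynomial (Fin 2) k) * X 1 ^ d = (a : MvPolynomial (Fin 2) k) := by
    show (X 0 * X 1 ^ (d - 1) : MvPolynomial (Fin 2) k) ^ e * X 1 ^ d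
        = (X 0 ^ (e - 1) * X 1 ^ (d * e - (e - 1))) * (X 0 * X 1 ^ (d - 1))
    calc (X 0 * X 1 ^ (d - 1) : MvPolynomial (Fin 2) k) ^ e * X 1 ^ d
        = X 0 ^ e * X 1 ^ ((d - 1) * e + d) := by
          rw [mul_pow, ← pow_mul, mul_assoc, ← pow_add]
      _ = X 0 ^ ((e - 1) + 1) * X 1 ^ (d * e - (e - 1) + (d - 1)) := by
          rw [h3, show e - 1 + 1 = e by omega]
      _ = (X 0 ^ (e - 1) * X 1 ^ (d * e - (e - 1))) * (X 0 * X 1 ^ (d - 1)) := by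
          ring
  -- evaluation of the integral equation
  have heval : Polynomial.aeval ((X 1 : MvPolynomial (Fin 2) k) ^ d)
      (Polynomial.X ^ e - Polynomial.C te) = 0 := by
    rw [Polynomial.aeval_def, Polynomial.eval₂_sub, Polynomial.eval₂_X_pow,
      Polynomial.eval₂_C, ← pow_mul]
    have : (algebraMap R (MvPolynomial (Fin 2) k)) te = X 1 ^ (d * e) := hteval
    rw [this, sub_self]
  have hint : IsIntegral R ((X 1 : MvPolynomial (Fin 2) k) ^ d) :=
    ⟨Polynomial.X ^ e - Polynomial.C te,
      Polynomial.monic_X_pow_sub_C te (by omega), by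
        rw [← Polynomial.aeval_def]; exact heval⟩
  have hnotmem := wrc_td_not_mem k d e hd he
  refine ⟨⟨a, b, hb0, hkey⟩, ⟨te, hteval, heval⟩, hint, hnotmem, ?_⟩
  -- not integrally closed
  intro hIC
  letI : IsDomain R := inferInstance
  let K := FractionRing R
  let φ := algebraMap R K
  have hφinj : Function.Injective ⇑φ := IsFractionRing.injective R K
  have hφb : φ b ≠ 0 := fun h => hb0 (hφinj (by rw [h, map_zero]))
  set α : K := φ a / φ b with hα
  have hαint : IsIntegral R α := by
    refine ⟨Polynomial.X ^ e - Polynomial.C te,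
      Polynomial.monic_X_pow_sub_C te (by omega), ?_⟩
    rw [Polynomial.eval₂_sub, Polynomial.eval₂_X_pow, Polynomial.eval₂_C]
    have habe : a ^ e = te * b ^ e := by
      apply Subtype.ext
      show ((a : MvPolynomial (Fin 2) k)) ^ e
          = (te : MvPolynomial (Fin 2) k) * ((b : MvPolynomial (Fin 2) k)) ^ e
      rw [← hkey, hteval, mul_pow, ← pow_mul]
      ring
    rw [hα, div_pow, sub_eq_zero, div_eq_iff (pow_ne_zero e hφb), ← map_pow, ← map_pow,
      ← map_mul, habe]
  obtain ⟨y, hy⟩ := IsIntegrallyClosed.isIntegral_iff.mp hαint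
  have hyb : φ (y * b) = φ a := by
    rw [map_mul, hy, hα, div_mul_cancel₀ _ hφb]
  have hyb' : y * b = a := hφinj hyb
  have : ((y : MvPolynomial (Fin 2) k)) * (b : MvPolynomial (Fin 2) k)
      = (b : MvPolynomial (Fin 2) k) * X 1 ^ d := by
    have := congrArg (Subtype.val) hyb'
    push_cast at this
    rw [this, hkey]
  have hyeq : (y : MvPolynomial (Fin 2) k) = X 1 ^ d := by
    have h := this
    rw [mul_comm] at h
    exact mul_left_cancel₀ hbM h
  exact hnotmem (hyeq ▸ y.2)
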